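/- Let n ≥ 2 and suppose T_n tiles S_n, i.e., there exists a subset Y ⊆ S_n such that (T_n, Y) is a tiling of S_n (or a subset X with (X, T_n) a tiling). Then for every partition λ = (λ_1,…,λ_ℓ) of n satisfying ∑_{i=1}^{ℓ} λ_i(λ_i − 2i + 1) ≥ 0, the integer 1 + n(n−1)/2 divides λ_1!·λ_2!·⋯·λ_ℓ!. -/

import Mathlib

/-- `(X, Y)` is a tiling of the group `G`: every element of `G` can be written as `x * y`
for a unique pair `(x, y) ∈ X × Y`. -/
def IsTiling {G : Type*} [Group G] (X Y : Set G) : Prop :=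
  ∀ g : G, ∃! p : G × G, p.1 ∈ X ∧ p.2 ∈ Y ∧ p.1 * p.2 = g

/-- `T n`: the identity together with all transpositions in the symmetric group `S_n`. -/
def transpositionsWithId (n : ℕ) : Set (Equiv.Perm (Fin n)) :=
  {1} ∪ {σ : Equiv.Perm (Fin n) | σ.IsSwap}

open Finset Equiv

namespace TilingAux

variable {n l : ℕ}

/-! ### Elementary lemmas about colorings, swaps and updates -/

lemma comp_swap_self (w : Fin n → Fin l) {i j : Fin n} (h : w i = w j) :
    w ∘ ⇑(Equiv.swap i j) = w := by
  funext x
  rcases eq_or_ne x i with rfl | hi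
  · simp [h]
  rcases eq_or_ne x j with rfl | hj
  · simp [h]
  · simp [Equiv.swap_apply_of_ne_of_ne hi hj]

lemma update_comp_swap (u : Fin n → Fin l) {i j : Fin n} (hij : i ≠ j) (h : u i = u j)
    (b : Fin l) :
    Function.update u i b ∘ ⇑(Equiv.swap i j) = Function.update u j b := by
  funext x
  rcases eq_or_ne x i with rfl | hi
  · show Function.update u x b (Equiv.swap x j x) = _
    rw [Equiv.swap_apply_left, Function.update_of_ne (Ne.symm hij),
      Function.update_of_ne hij, h]
  rcases eq_or_ne x j with rfl | hj
  · show Function.update u i b (Equiv.swap i x x) = _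
    rw [Equiv.swap_apply_right, Function.update_self, Function.update_self]
  · show Function.update u i b (Equiv.swap i j x) = _
    rw [Equiv.swap_apply_of_ne_of_ne hi hj, Function.update_of_ne hi,
      Function.update_of_ne hj]

lemma update_inj_aux {u u' : Fin n → Fin l} {i : Fin n} {b : Fin l}
    (h : Function.update u i b = Function.update u' i b) (ha : u i = u' i) : u = u' := by
  funext x
  rcases eq_or_ne x i with rfl | hx
  · exact ha
  · have := congrFun h x
    rwa [Function.update_of_ne hx, Function.update_of_ne hx] at this

/-- fiber of a coloring -/
def fib (w : Fin n → Fin l) (k : Fin l) : Finset (Fin n) :=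
  univ.filter fun i => w i = k

def sigmaFstFiber {β : Fin l → Type*} (k : Fin l) :
    {s : Σ k', β k' // s.1 = k} ≃ β k where
  toFun s := s.2 ▸ s.1.2
  invFun x := ⟨⟨k, x⟩, rfl⟩
  left_inv := by rintro ⟨⟨k', x⟩, h⟩; subst h; rfl
  right_inv x := rfl

lemma exists_w0 (lam : Fin l → ℕ) (hsum : ∑ i, lam i = n) :
    ∃ w₀ : Fin n → Fin l, ∀ k, (fib w₀ k).card = lam k := by
  have hcard : Fintype.card (Σ k : Fin l, Fin (lam k)) = Fintype.card (Fin n) := by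
    simp [Fintype.card_sigma, hsum]
  obtain ⟨e⟩ : Nonempty (Fin n ≃ Σ k : Fin l, Fin (lam k)) :=
    ⟨(Fintype.equivOfCardEq hcard).symm⟩
  refine ⟨fun i => (e i).1, fun k => ?_⟩
  rw [fib, ← Fintype.card_subtype]
  have e2 : {i : Fin n // (e i).1 = k} ≃ {s : Σ k : Fin l, Fin (lam k) // s.1 = k} :=
    e.subtypeEquiv fun i => Iff.rfl
  rw [Fintype.card_congr (e2.trans (sigmaFstFiber k))]
  simp

/-! ### Counting permutations compatible with a pair of colorings -/

lemma fib_card_comp (w₀ : Fin n → Fin l) (g : Equiv.Perm (Fin n)) (k : Fin l) :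
    (fib (w₀ ∘ ⇑g) k).card = (fib w₀ k).card := by
  apply Finset.card_nbij (i := ⇑g)
  · intro i hi
    simp only [fib, Finset.mem_coe, Finset.mem_filter, Finset.mem_univ, true_and] at hi ⊢
    exact hi
  · intro a _ b _ hab
    exact g.injective hab
  · intro i' hi'
    refine ⟨g⁻¹ i', ?_, by simp⟩
    simp only [fib, Finset.coe_filter, Set.mem_setOf_eq, Finset.mem_univ, true_and,
      Function.comp_apply, Equiv.Perm.coe_inv, Equiv.apply_symm_apply] at hi' ⊢
    exact hi'

/-- The equivalence between permutations intertwining `w` and `w₀`, and tuples of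
fiber bijections. -/
def permFiberEquiv (w₀ w : Fin n → Fin l) :
    {g : Equiv.Perm (Fin n) // w₀ ∘ ⇑g = w} ≃
      Π k, ({i // w i = k} ≃ {i // w₀ i = k}) where
  toFun gp k := Equiv.subtypeEquiv gp.1 fun i => by
    rw [← congrFun gp.2 i]; exact Iff.rfl
  invFun F :=
    ⟨(Equiv.sigmaFiberEquiv w).symm.trans ((Equiv.sigmaCongrRight F).trans
      (Equiv.sigmaFiberEquiv w₀)), by
        funext i
        exact (F (w i) ⟨i, rfl⟩).2⟩
  left_inv := by
    rintro ⟨g, hg⟩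
    ext i
    rfl
  right_inv := by
    intro F
    funext k
    ext x
    obtain ⟨i, hi⟩ := x
    subst hi
    rfl

lemma card_comp_eq (w₀ w : Fin n → Fin l)
    (h : ∀ k, (fib w k).card = (fib w₀ k).card) :
    (Finset.univ.filter fun g : Equiv.Perm (Fin n) => w₀ ∘ ⇑g = w).card =
      ∏ k, ((fib w₀ k).card).factorial := by
  rw [← Fintype.card_subtype, Fintype.card_congr (permFiberEquiv w₀ w), Fintype.card_pi]
  refine Finset.prod_congr rfl fun k _ => ?_
  have hc : Fintype.card {i // w i = k} = Fintype.card {i // w₀ i = k} := by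
    rw [Fintype.card_subtype, Fintype.card_subtype]
    exact h k
  rw [Fintype.card_equiv (Fintype.equivOfCardEq hc), hc, Fintype.card_subtype]
  rfl

/-! ### The set of transpositions together with the identity -/

def ltP (n : ℕ) : Finset (Fin n × Fin n) := univ.filter fun p => p.1 < p.2
def gtP (n : ℕ) : Finset (Fin n × Fin n) := univ.filter fun p => p.2 < p.1

lemma swap_injOn : Set.InjOn (fun p : Fin n × Fin n => Equiv.swap p.1 p.2) (ltP n) := by
  rintro ⟨i, j⟩ hp ⟨i', j'⟩ hq h
  simp only [ltP, coe_filter, Set.mem_setOf_eq] at hp hq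
  have h' : Equiv.swap i j = Equiv.swap i' j' := h
  have h1 : Equiv.swap i' j' i = j := by rw [← h']; exact Equiv.swap_apply_left i j
  rcases eq_or_ne i i' with rfl | hii'
  · have : j = j' := by rwa [Equiv.swap_apply_left, eq_comm] at h1
    simp [this]
  rcases eq_or_ne i j' with rfl | hij'
  · rw [Equiv.swap_apply_right] at h1
    exact absurd (hq.2.trans (h1 ▸ hp.2)) (lt_irrefl i')
  · rw [Equiv.swap_apply_of_ne_of_ne hii' hij'] at h1
    exact absurd (h1 ▸ hp.2) (lt_irrefl i)

lemma one_not_mem_image :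
    (1 : Equiv.Perm (Fin n)) ∉ (ltP n).image fun p => Equiv.swap p.1 p.2 := by
  simp only [mem_image, not_exists, not_and]
  rintro ⟨i, j⟩ hp h
  simp only [ltP, mem_filter] at hp
  exact absurd (Equiv.swap_eq_one_iff.mp h) (ne_of_lt hp.2)

noncomputable def Tfin (n : ℕ) : Finset (Equiv.Perm (Fin n)) :=
  (Set.toFinite (transpositionsWithId n)).toFinset

lemma T_eq : Tfin n = insert 1 ((ltP n).image fun p => Equiv.swap p.1 p.2) := by
  ext x
  simp only [Tfin, transpositionsWithId, Set.Finite.mem_toFinset, Set.mem_union,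
    Set.mem_singleton_iff, Set.mem_setOf_eq, mem_insert, mem_image]
  apply or_congr Iff.rfl
  constructor
  · rintro ⟨i, j, hij, rfl⟩
    rcases lt_or_gt_of_ne hij with h | h
    · exact ⟨(i, j), by simp [ltP, h], rfl⟩
    · exact ⟨(j, i), by simp [ltP, h], Equiv.swap_comm j i⟩
  · rintro ⟨⟨i, j⟩, hp, rfl⟩
    simp only [ltP, mem_filter] at hp
    exact ⟨i, j, ne_of_lt hp.2, rfl⟩

lemma sum_offDiag {m : ℕ} {M : Type*} [AddCommMonoid M] (X : Fin m × Fin m → M)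
    (hX : ∀ p : Fin m × Fin m, X p.swap = X p) :
    ∑ p ∈ (univ : Finset (Fin m)).offDiag, X p =
      (∑ p ∈ ltP m, X p) + ∑ p ∈ ltP m, X p := by
  have hu : (univ : Finset (Fin m)).offDiag = ltP m ∪ gtP m := by
    ext p
    simp only [mem_offDiag, mem_univ, true_and, mem_union, ltP, gtP, mem_filter]
    exact ne_iff_lt_or_gt
  have hd : Disjoint (ltP m) (gtP m) := by
    rw [Finset.disjoint_left]
    rintro p hp hq
    simp only [ltP, gtP, mem_filter] at hp hq
    exact absurd (hp.2.trans hq.2) (lt_irrefl _)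
  rw [hu, Finset.sum_union hd]
  congr 1
  apply Finset.sum_nbij (i := Prod.swap)
  · rintro ⟨i, j⟩ hp; simp only [ltP, gtP, mem_filter] at hp ⊢; exact ⟨mem_univ _, hp.2⟩
  · exact fun a _ b _ h => Prod.swap_injective h
  · rintro ⟨i, j⟩ hp
    refine ⟨⟨j, i⟩, ?_, rfl⟩
    simp only [ltP, gtP, coe_filter, Set.mem_setOf_eq, mem_univ, true_and] at hp ⊢
    exact hp
  · exact fun p _ => (hX p).symm

lemma ltP_card (m : ℕ) : (ltP m).card = m * (m - 1) / 2 := by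
  have h := sum_offDiag (m := m) (fun _ => (1 : ℕ)) (fun _ => rfl)
  simp only [Finset.sum_const, smul_eq_mul, mul_one] at h
  have ho : (univ : Finset (Fin m)).offDiag.card = m * m - m := by
    rw [Finset.offDiag_card]; simp
  have hn : m * (m - 1) = m * m - m := by
    rw [Nat.mul_sub_one]
  omega

lemma Tfin_card : (Tfin n).card = 1 + n * (n - 1) / 2 := by
  rw [T_eq, Finset.card_insert_of_notMem one_not_mem_image,
    Finset.card_image_of_injOn swap_injOn, ltP_card]
  omega

/-! ### The tiling counting identity -/

noncomputable def fY (w₀ : Fin n → Fin l) (Y : Set (Equiv.Perm (Fin n)))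
    (w : Fin n → Fin l) : ℕ :=
  ((Set.toFinite Y).toFinset.filter fun y : Equiv.Perm (Fin n) => w₀ ∘ ⇑y⁻¹ = w).card

lemma key_iff (w₀ : Fin n → Fin l) (g x y : Equiv.Perm (Fin n)) :
    (w₀ ∘ ⇑y⁻¹ = (w₀ ∘ ⇑g) ∘ ⇑x) ↔ (w₀ ∘ ⇑(x * y)⁻¹ = w₀ ∘ ⇑g) := by
  constructor <;> intro h <;> funext i
  · have h2 := congrFun h (x⁻¹ i)
    simp only [Function.comp_apply, Equiv.Perm.coe_inv, Equiv.apply_symm_apply] at h2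
    simpa [mul_inv_rev, Equiv.Perm.mul_apply] using h2
  · have h2 := congrFun h (x i)
    simp only [mul_inv_rev, Function.comp_apply, Equiv.Perm.mul_apply,
      Equiv.Perm.coe_inv, Equiv.symm_apply_apply] at h2
    simpa using h2

lemma star (w₀ : Fin n → Fin l) (Y : Set (Equiv.Perm (Fin n)))
    (hY : IsTiling (transpositionsWithId n) Y) (g : Equiv.Perm (Fin n)) :
    ∑ x ∈ Tfin n, fY w₀ Y ((w₀ ∘ ⇑g) ∘ ⇑x) =
      (univ.filter fun g' : Equiv.Perm (Fin n) => w₀ ∘ ⇑g'⁻¹ = w₀ ∘ ⇑g).card := by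
  have h1 : ∑ x ∈ Tfin n, fY w₀ Y ((w₀ ∘ ⇑g) ∘ ⇑x) =
      ((Tfin n ×ˢ (Set.toFinite Y).toFinset).filter
        fun p : Equiv.Perm (Fin n) × Equiv.Perm (Fin n) =>
          w₀ ∘ ⇑p.2⁻¹ = (w₀ ∘ ⇑g) ∘ ⇑p.1).card := by
    rw [Finset.card_filter, Finset.sum_product]
    exact Finset.sum_congr rfl fun x _ => Finset.card_filter _ _
  rw [h1]
  apply Finset.card_nbij (i := fun p => p.1 * p.2)
  · rintro ⟨x, y⟩ hp
    simp only [mem_coe, mem_filter, mem_product, Set.Finite.mem_toFinset, Tfin] at hp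
    simp only [mem_coe, mem_filter, mem_univ, true_and]
    exact (key_iff w₀ g x y).mp hp.2
  · rintro ⟨x, y⟩ hp ⟨x', y'⟩ hq hprod
    simp only [coe_filter, mem_product, Set.Finite.mem_toFinset, Tfin,
      Set.mem_setOf_eq] at hp hq
    obtain ⟨u, -, huniq⟩ := hY (x * y)
    have e1 : (x, y) = u := huniq (x, y) ⟨hp.1.1, hp.1.2, rfl⟩
    have e2 : (x', y') = u := huniq (x', y') ⟨hq.1.1, hq.1.2, hprod.symm⟩
    rw [e1, e2]
  · intro g' hg'
    simp only [coe_filter, mem_univ, true_and, Set.mem_setOf_eq] at hg'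
    obtain ⟨⟨x, y⟩, ⟨hx, hy, hxy⟩, -⟩ := hY g'
    refine ⟨(x, y), ?_, hxy⟩
    simp only [coe_filter, mem_product, Set.Finite.mem_toFinset, Tfin, Set.mem_setOf_eq]
    refine ⟨⟨hx, hy⟩, (key_iff w₀ g x y).mpr ?_⟩
    rw [hxy]
    exact hg'

lemma coset_card_aux (w₀ : Fin n → Fin l) (g : Equiv.Perm (Fin n)) :
    (univ.filter fun g' : Equiv.Perm (Fin n) => w₀ ∘ ⇑g'⁻¹ = w₀ ∘ ⇑g).card =
      (univ.filter fun h : Equiv.Perm (Fin n) => w₀ ∘ ⇑h = w₀ ∘ ⇑g).card := by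
  apply Finset.card_nbij (i := fun g' => g'⁻¹)
  · intro g' hg'
    simp only [mem_coe, mem_filter, mem_univ, true_and] at hg' ⊢
    exact hg'
  · intro a _ b _ h; exact inv_injective h
  · intro h hh
    refine ⟨h⁻¹, ?_, inv_inv h⟩
    simp only [coe_filter, mem_univ, true_and, Set.mem_setOf_eq, inv_inv] at hh ⊢
    exact hh

lemma star' (w₀ : Fin n → Fin l) (Y : Set (Equiv.Perm (Fin n)))
    (hY : IsTiling (transpositionsWithId n) Y) (g : Equiv.Perm (Fin n)) :
    ∑ x ∈ Tfin n, fY w₀ Y ((w₀ ∘ ⇑g) ∘ ⇑x) = ∏ k, ((fib w₀ k).card).factorial := by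
  rw [star w₀ Y hY g, coset_card_aux w₀ g,
    card_comp_eq w₀ (w₀ ∘ ⇑g) (fib_card_comp w₀ g)]

/-! ### The quadratic form and its sum-of-squares lower bound -/

/-- The block-pair component of the quadratic form. -/
def E (d : (Fin n → Fin l) → ℤ) (a b : Fin l) : ℤ :=
  ∑ w : Fin n → Fin l, ∑ p ∈ (univ : Finset (Fin n)).offDiag.filter
    (fun p => w p.1 = a ∧ w p.2 = b), d w * d (w ∘ ⇑(Equiv.swap p.1 p.2))

lemma E_symm (d : (Fin n → Fin l) → ℤ) (a b : Fin l) : E d a b = E d b a := by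
  unfold E
  refine Finset.sum_congr rfl fun w _ => ?_
  apply Finset.sum_nbij (i := Prod.swap)
  · rintro ⟨i, j⟩ hp
    simp only [mem_filter, mem_offDiag, mem_univ, true_and] at hp ⊢
    exact ⟨hp.1.symm, hp.2.2, hp.2.1⟩
  · exact fun p _ q _ h => Prod.swap_injective h
  · rintro ⟨i, j⟩ hp
    refine ⟨⟨j, i⟩, ?_, rfl⟩
    simp only [coe_filter, mem_offDiag, mem_univ, true_and, Set.mem_setOf_eq] at hp ⊢
    exact ⟨hp.1.symm, hp.2.2, hp.2.1⟩
  · rintro ⟨i, j⟩ _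
    simp only [Prod.swap_prod_mk]
    rw [Equiv.swap_comm]

lemma fib_offDiag (w : Fin n → Fin l) (a : Fin l) :
    (fib w a).offDiag = (univ : Finset (Fin n)).offDiag.filter
      (fun p => w p.1 = a ∧ w p.2 = a) := by
  ext ⟨i, j⟩
  simp only [mem_offDiag, fib, mem_filter, mem_univ, true_and]
  tauto

lemma E_diag (lam : Fin l → ℕ) (d : (Fin n → Fin l) → ℤ)
    (hsupp : ∀ w, d w ≠ 0 → ∀ k, (fib w k).card = lam k) (a : Fin l) :
    E d a a = ((lam a * lam a - lam a : ℕ) : ℤ) * ∑ w : Fin n → Fin l, d w ^ 2 := by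
  unfold E
  rw [Finset.mul_sum]
  refine Finset.sum_congr rfl fun w _ => ?_
  rw [← fib_offDiag]
  have hterm : ∀ p ∈ (fib w a).offDiag, d w * d (w ∘ ⇑(Equiv.swap p.1 p.2)) = d w ^ 2 := by
    rintro ⟨i, j⟩ hp
    simp only [mem_offDiag, fib, mem_filter, mem_univ, true_and] at hp
    rw [comp_swap_self w (hp.1.trans hp.2.1.symm), sq]
  rw [Finset.sum_congr rfl hterm, Finset.sum_const, Finset.offDiag_card, nsmul_eq_mul]
  rcases eq_or_ne (d w) 0 with h0 | h0
  · rw [h0]; ring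
  · rw [hsupp w h0 a]

lemma sum_fib_eq {M : Type*} [AddCommMonoid M] (a : Fin l) (F : (Fin n → Fin l) → Fin n → M) :
    ∑ u : Fin n → Fin l, ∑ i ∈ fib u a, F u i =
      ∑ q ∈ ((univ : Finset ((Fin n → Fin l) × Fin n))).filter (fun q => q.1 q.2 = a),
        F q.1 q.2 := by
  rw [Finset.sum_filter, ← Finset.univ_product_univ, Finset.sum_product]
  refine Finset.sum_congr rfl fun u _ => ?_
  rw [fib, Finset.sum_filter]

lemma sum_fib_offDiag_eq {M : Type*} [AddCommMonoid M] (a b : Fin l)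
    (F : (Fin n → Fin l) → Fin n × Fin n → M) :
    ∑ u : Fin n → Fin l, ∑ p ∈ (univ : Finset (Fin n)).offDiag.filter
        (fun p => u p.1 = a ∧ u p.2 = b), F u p =
      ∑ q ∈ ((univ : Finset (Fin n → Fin l)) ×ˢ (univ : Finset (Fin n)).offDiag).filter
        (fun q => q.1 q.2.1 = a ∧ q.1 q.2.2 = b), F q.1 q.2 := by
  rw [Finset.sum_filter, Finset.sum_product]
  refine Finset.sum_congr rfl fun u _ => ?_
  rw [Finset.sum_filter]

lemma sos_identity (a b : Fin l) (d : (Fin n → Fin l) → ℤ) :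
    ∑ u : Fin n → Fin l, (∑ i ∈ fib u a, d (Function.update u i b)) ^ 2 =
      (∑ w : Fin n → Fin l, ((fib w b).card : ℤ) * d w ^ 2) + E d b a := by
  have expand : ∀ u : Fin n → Fin l,
      (∑ i ∈ fib u a, d (Function.update u i b)) ^ 2 =
        (∑ i ∈ fib u a, d (Function.update u i b) ^ 2) +
          ∑ p ∈ (fib u a).offDiag, d (Function.update u p.1 b) * d (Function.update u p.2 b) := by
    intro u
    rw [sq, Finset.sum_mul_sum, ← Finset.sum_product', ← Finset.diag_union_offDiag,
      Finset.sum_union (Finset.disjoint_diag_offDiag _), Finset.sum_diag]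
    congr 1
    refine Finset.sum_congr rfl fun i _ => (sq _).symm
  rw [Finset.sum_congr rfl fun u _ => expand u, Finset.sum_add_distrib]
  congr 1
  · -- diagonal part
    rw [sum_fib_eq a (fun u i => d (Function.update u i b) ^ 2)]
    have : ∑ w : Fin n → Fin l, ((fib w b).card : ℤ) * d w ^ 2 =
        ∑ w : Fin n → Fin l, ∑ _i ∈ fib w b, d w ^ 2 := by
      refine Finset.sum_congr rfl fun w _ => ?_
      rw [Finset.sum_const, nsmul_eq_mul]
    rw [this, sum_fib_eq b (fun w _ => d w ^ 2)]
    apply Finset.sum_nbij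
      (f := fun q : (Fin n → Fin l) × Fin n => d (Function.update q.1 q.2 b) ^ 2)
      (g := fun q : (Fin n → Fin l) × Fin n => d q.1 ^ 2)
      (i := fun q : (Fin n → Fin l) × Fin n => (Function.update q.1 q.2 b, q.2))
    · rintro ⟨u, i⟩ hq
      simp only [mem_filter, mem_univ, true_and] at hq ⊢
      exact Function.update_self i b u
    · rintro ⟨u, i⟩ hu ⟨u', i'⟩ hu' h
      simp only [coe_filter, mem_univ, true_and, Set.mem_setOf_eq] at hu hu'
      simp only [Prod.mk.injEq] at h
      obtain ⟨h1, h2⟩ := h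
      subst h2
      exact Prod.ext (update_inj_aux h1 (hu.trans hu'.symm)) rfl
    · rintro ⟨w, i⟩ hw
      simp only [coe_filter, mem_univ, true_and, Set.mem_setOf_eq] at hw
      refine ⟨(Function.update w i a, i), ?_, ?_⟩
      · simp only [coe_filter, mem_univ, true_and, Set.mem_setOf_eq]
        exact Function.update_self i a w
      · simp only [Prod.mk.injEq, and_true]
        rw [Function.update_idem, ← hw, Function.update_eq_self]
    · rintro ⟨u, i⟩ _
      rfl
  · -- off-diagonal part
    have h1 : ∀ u : Fin n → Fin l, (fib u a).offDiag =
        (univ : Finset (Fin n)).offDiag.filter (fun p => u p.1 = a ∧ u p.2 = a) :=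
      fun u => fib_offDiag u a
    rw [Finset.sum_congr rfl fun u _ => by rw [h1 u]]
    rw [sum_fib_offDiag_eq a a (fun u p => d (Function.update u p.1 b) * d (Function.update u p.2 b))]
    unfold E
    rw [sum_fib_offDiag_eq b a (fun w p => d w * d (w ∘ ⇑(Equiv.swap p.1 p.2)))]
    apply Finset.sum_nbij
      (f := fun q : (Fin n → Fin l) × (Fin n × Fin n) =>
        d (Function.update q.1 q.2.1 b) * d (Function.update q.1 q.2.2 b))
      (g := fun q : (Fin n → Fin l) × (Fin n × Fin n) =>
        d q.1 * d (q.1 ∘ ⇑(Equiv.swap q.2.1 q.2.2)))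
      (i := fun q : (Fin n → Fin l) × (Fin n × Fin n) =>
        (Function.update q.1 q.2.1 b, q.2))
    · rintro ⟨u, i, j⟩ hq
      simp only [mem_filter, mem_product, mem_univ, true_and, mem_offDiag] at hq ⊢
      refine ⟨hq.1, Function.update_self i b u, ?_⟩
      rw [Function.update_of_ne (Ne.symm hq.1)]
      exact hq.2.2
    · rintro ⟨u, i, j⟩ hu ⟨u', i', j'⟩ hu' h
      simp only [coe_filter, mem_product, mem_univ, true_and, mem_offDiag,
        Set.mem_setOf_eq] at hu hu'
      simp only [Prod.mk.injEq] at h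
      obtain ⟨h1', rfl, rfl⟩ := h
      exact Prod.ext (update_inj_aux h1' (hu.2.1.trans hu'.2.1.symm)) rfl
    · rintro ⟨w, i, j⟩ hw
      simp only [coe_filter, mem_product, mem_univ, true_and, mem_offDiag,
        Set.mem_setOf_eq] at hw
      refine ⟨(Function.update w i a, (i, j)), ?_, ?_⟩
      · simp only [coe_filter, mem_product, mem_univ, true_and, mem_offDiag,
          Set.mem_setOf_eq]
        refine ⟨hw.1, Function.update_self i a w, ?_⟩
        rw [Function.update_of_ne (Ne.symm hw.1)]
        exact hw.2.2
      · simp only [Prod.mk.injEq, and_true]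
        rw [Function.update_idem, ← hw.2.1, Function.update_eq_self]
    · rintro ⟨u, i, j⟩ hq
      simp only [mem_filter, mem_product, mem_univ, true_and, mem_offDiag] at hq
      show _ = d (Function.update u i b) * d (Function.update u i b ∘ ⇑(Equiv.swap i j))
      rw [update_comp_swap u hq.1 (hq.2.1.trans hq.2.2.symm) b]

lemma E_bound (lam : Fin l → ℕ) (d : (Fin n → Fin l) → ℤ)
    (hsupp : ∀ w, d w ≠ 0 → ∀ k, (fib w k).card = lam k) (a b : Fin l) :
    -((lam b : ℤ) * ∑ w : Fin n → Fin l, d w ^ 2) ≤ E d b a := by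
  have hpos : (0 : ℤ) ≤ ∑ u : Fin n → Fin l, (∑ i ∈ fib u a, d (Function.update u i b)) ^ 2 :=
    Finset.sum_nonneg fun u _ => sq_nonneg _
  rw [sos_identity a b d] at hpos
  have hfib : ∑ w : Fin n → Fin l, ((fib w b).card : ℤ) * d w ^ 2 =
      (lam b : ℤ) * ∑ w : Fin n → Fin l, d w ^ 2 := by
    rw [Finset.mul_sum]
    refine Finset.sum_congr rfl fun w _ => ?_
    rcases eq_or_ne (d w) 0 with h0 | h0
    · rw [h0]; ring
    · rw [hsupp w h0 b]
  rw [hfib] at hpos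
  linarith

end TilingAux

lemma tiling_inv {n : ℕ} {X : Set (Equiv.Perm (Fin n))}
    (hX : IsTiling X (transpositionsWithId n)) :
    IsTiling (transpositionsWithId n) X⁻¹ := by
  have htinv : ∀ s ∈ transpositionsWithId n, s⁻¹ = s := by
    rintro s hs
    rcases hs with hs | hs
    · rw [Set.mem_singleton_iff] at hs; rw [hs, inv_one]
    · obtain ⟨i, j, hij, rfl⟩ := hs
      exact Equiv.swap_inv i j
  intro g
  obtain ⟨⟨x, t⟩, ⟨hx, ht, hxt⟩, huniq⟩ := hX g⁻¹
  refine ⟨(t, x⁻¹), ⟨ht, Set.inv_mem_inv.mpr hx, ?_⟩, ?_⟩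
  · have : g = (x * t)⁻¹ := by rw [hxt, inv_inv]
    rw [this, mul_inv_rev, htinv t ht]
  · rintro ⟨s, z⟩ ⟨hs, hz, hsz⟩
    have hz' : z⁻¹ ∈ X := Set.mem_inv.mp hz
    have hprod : z⁻¹ * s = g⁻¹ := by
      have hsz' : s * z = g := hsz
      rw [← hsz', mul_inv_rev, htinv s hs]
    have := huniq (z⁻¹, s) ⟨hz', hs, hprod⟩
    have h1 : z⁻¹ = x := congrArg Prod.fst this
    have h2 : s = t := congrArg Prod.snd this
    refine Prod.ext h2 ?_
    rw [← h1, inv_inv]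

namespace TilingAux

lemma main_lemma (n l : ℕ) (lam : Fin l → ℕ) (hpos : ∀ i, 0 < lam i)
    (hsum : ∑ i, lam i = n)
    (hcontent : 0 ≤ ∑ i : Fin l,
      (lam i : ℤ) * ((lam i : ℤ) - 2 * (((i : ℕ) : ℤ) + 1) + 1))
    (Y : Set (Equiv.Perm (Fin n))) (hY : IsTiling (transpositionsWithId n) Y) :
    (1 + n * (n - 1) / 2) ∣ ∏ i : Fin l, (lam i).factorial := by
  classical
  obtain ⟨w₀, hw₀⟩ := exists_w0 lam hsum
  set Hc : ℕ := ∏ i : Fin l, (lam i).factorial with hHc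
  have hfibprod : ∏ k, ((fib w₀ k).card).factorial = Hc := by
    rw [hHc]
    exact Finset.prod_congr rfl fun k _ => by rw [hw₀ k]
  set m : ℕ := (Tfin n).card with hm
  set d : (Fin n → Fin l) → ℤ := fun w =>
    if ∃ g : Equiv.Perm (Fin n), w = w₀ ∘ ⇑g then (m : ℤ) * fY w₀ Y w - (Hc : ℤ) else 0
    with hd
  set S : ℤ := ∑ w : Fin n → Fin l, d w ^ 2 with hS
  have hS0 : 0 ≤ S := Finset.sum_nonneg fun w _ => sq_nonneg _
  have hsupp : ∀ w, d w ≠ 0 → ∀ k, (fib w k).card = lam k := by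
    intro w hw k
    by_cases ho : ∃ g : Equiv.Perm (Fin n), w = w₀ ∘ ⇑g
    · obtain ⟨g, rfl⟩ := ho
      rw [fib_card_comp w₀ g k, hw₀ k]
    · rw [hd] at hw
      simp only [ho, if_false] at hw
      exact absurd rfl hw
  -- inner sums vanish on the orbit
  have inner : ∀ g : Equiv.Perm (Fin n), ∑ x ∈ Tfin n, d ((w₀ ∘ ⇑g) ∘ ⇑x) = 0 := by
    intro g
    have hterm : ∀ x ∈ Tfin n, d ((w₀ ∘ ⇑g) ∘ ⇑x) =
        (m : ℤ) * (fY w₀ Y ((w₀ ∘ ⇑g) ∘ ⇑x) : ℤ) - (Hc : ℤ) := by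
      intro x _
      rw [hd]
      exact if_pos ⟨g * x, by rw [Equiv.Perm.coe_mul]; rfl⟩
    rw [Finset.sum_congr rfl hterm, Finset.sum_sub_distrib, ← Finset.mul_sum]
    have hstar := star' w₀ Y hY g
    rw [hfibprod] at hstar
    have hcast : (∑ x ∈ Tfin n, (fY w₀ Y ((w₀ ∘ ⇑g) ∘ ⇑x) : ℤ)) = (Hc : ℤ) := by
      exact_mod_cast hstar
    rw [hcast, Finset.sum_const, nsmul_eq_mul, ← hm]
    ring
  -- the quadratic form is zero
  have hBzero : ∑ w : Fin n → Fin l, d w * ∑ x ∈ Tfin n, d (w ∘ ⇑x) = 0 := by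
    apply Finset.sum_eq_zero
    intro w _
    rcases eq_or_ne (d w) 0 with h0 | h0
    · rw [h0, zero_mul]
    · have ho : ∃ g : Equiv.Perm (Fin n), w = w₀ ∘ ⇑g := by
        by_contra hc
        rw [hd] at h0
        simp only [hc, if_false] at h0
        exact h0 rfl
      obtain ⟨g, rfl⟩ := ho
      rw [inner g, mul_zero]
  -- expansion of the quadratic form
  have hexp : ∑ w : Fin n → Fin l, d w * ∑ x ∈ Tfin n, d (w ∘ ⇑x) =
      S + ∑ p ∈ ltP n, ∑ w : Fin n → Fin l, d w * d (w ∘ ⇑(Equiv.swap p.1 p.2)) := by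
    have h1 : ∀ w : Fin n → Fin l, ∑ x ∈ Tfin n, d (w ∘ ⇑x) =
        d w + ∑ p ∈ ltP n, d (w ∘ ⇑(Equiv.swap p.1 p.2)) := by
      intro w
      rw [T_eq, Finset.sum_insert one_not_mem_image,
        Finset.sum_image (fun p hp q hq h => swap_injOn hp hq h)]
      have hone : w ∘ ⇑(1 : Equiv.Perm (Fin n)) = w := by
        rw [Equiv.Perm.coe_one, Function.comp_id]
      rw [hone]
    rw [Finset.sum_congr rfl fun w _ => by rw [h1 w]]
    have h2 : ∀ w : Fin n → Fin l,
        d w * (d w + ∑ p ∈ ltP n, d (w ∘ ⇑(Equiv.swap p.1 p.2))) =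
          d w ^ 2 + ∑ p ∈ ltP n, d w * d (w ∘ ⇑(Equiv.swap p.1 p.2)) := by
      intro w
      rw [mul_add, sq, Finset.mul_sum]
    rw [Finset.sum_congr rfl fun w _ => h2 w, Finset.sum_add_distrib, hS,
      Finset.sum_comm]
  have hltP : ∑ p ∈ ltP n, ∑ w : Fin n → Fin l, d w * d (w ∘ ⇑(Equiv.swap p.1 p.2)) = -S := by
    rw [hexp] at hBzero
    linarith
  -- symmetrization
  have hXsym : ∀ p : Fin n × Fin n,
      (∑ w : Fin n → Fin l, d w * d (w ∘ ⇑(Equiv.swap p.swap.1 p.swap.2))) =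
        ∑ w : Fin n → Fin l, d w * d (w ∘ ⇑(Equiv.swap p.1 p.2)) := by
    intro p
    refine Finset.sum_congr rfl fun w _ => ?_
    rw [Prod.fst_swap, Prod.snd_swap, Equiv.swap_comm]
  have hoff : ∑ p ∈ (univ : Finset (Fin n)).offDiag,
      ∑ w : Fin n → Fin l, d w * d (w ∘ ⇑(Equiv.swap p.1 p.2)) = -S + -S := by
    rw [sum_offDiag _ hXsym, hltP]
  -- fiberwise split into block pairs
  have hsplit : ∑ ab : Fin l × Fin l, E d ab.1 ab.2 =
      ∑ p ∈ (univ : Finset (Fin n)).offDiag,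
        ∑ w : Fin n → Fin l, d w * d (w ∘ ⇑(Equiv.swap p.1 p.2)) := by
    unfold E
    rw [Finset.sum_comm]
    rw [Finset.sum_comm (s := (univ : Finset (Fin n)).offDiag)]
    refine Finset.sum_congr rfl fun w _ => ?_
    rw [← Finset.sum_fiberwise ((univ : Finset (Fin n)).offDiag)
      (fun p => (w p.1, w p.2)) (fun p => d w * d (w ∘ ⇑(Equiv.swap p.1 p.2)))]
    refine Finset.sum_congr rfl fun ab _ => ?_
    refine Finset.sum_congr ?_ fun _ _ => rfl
    apply Finset.filter_congr
    intro p _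
    simp [Prod.ext_iff]
  -- diagonal and off-diagonal block contributions
  have hdiagsum : ∑ a : Fin l, E d a a =
      (∑ a : Fin l, ((lam a * lam a - lam a : ℕ) : ℤ)) * S := by
    rw [Finset.sum_mul]
    exact Finset.sum_congr rfl fun a _ => E_diag lam d hsupp a
  have hEoff : ∀ ab ∈ (univ : Finset (Fin l)).offDiag,
      -((lam (max ab.1 ab.2) : ℤ) * S) ≤ E d ab.1 ab.2 := by
    rintro ⟨a, b⟩ hab
    simp only [mem_offDiag, mem_univ, true_and] at hab
    rcases lt_or_gt_of_ne hab with h | h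
    · rw [max_eq_right (le_of_lt h), E_symm]
      exact E_bound lam d hsupp a b
    · rw [max_eq_left (le_of_lt h)]
      exact E_bound lam d hsupp b a
  have hblocks : ∑ ab : Fin l × Fin l, E d ab.1 ab.2 =
      (∑ a : Fin l, E d a a) + ∑ ab ∈ (univ : Finset (Fin l)).offDiag, E d ab.1 ab.2 := by
    rw [← Finset.univ_product_univ, ← Finset.diag_union_offDiag,
      Finset.sum_union (Finset.disjoint_diag_offDiag _), Finset.sum_diag]
  -- evaluating the max-sum
  have hmax : ∑ ab ∈ (univ : Finset (Fin l)).offDiag, ((lam (max ab.1 ab.2) : ℕ) : ℤ) =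
      2 * ∑ b : Fin l, ((b : ℕ) : ℤ) * (lam b : ℤ) := by
    rw [sum_offDiag (fun ab => ((lam (max ab.1 ab.2) : ℕ) : ℤ))
      (fun p => by simp only [Prod.fst_swap, Prod.snd_swap]; rw [max_comm])]
    have h2 : ∑ p ∈ ltP l, ((lam (max p.1 p.2) : ℕ) : ℤ) =
        ∑ b : Fin l, ((b : ℕ) : ℤ) * (lam b : ℤ) := by
      have hc : ∀ p ∈ ltP l, ((lam (max p.1 p.2) : ℕ) : ℤ) = ((lam p.2 : ℕ) : ℤ) := by
        intro p hp
        simp only [ltP, mem_filter] at hp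
        rw [max_eq_right (le_of_lt hp.2)]
      rw [Finset.sum_congr rfl hc,
        ← Finset.sum_fiberwise (ltP l) Prod.snd (fun p => ((lam p.2 : ℕ) : ℤ))]
      refine Finset.sum_congr rfl fun b _ => ?_
      have hc2 : ∀ p ∈ (ltP l).filter (fun p => p.2 = b), ((lam p.2 : ℕ) : ℤ) = (lam b : ℤ) := by
        intro p hp
        simp only [mem_filter] at hp
        rw [hp.2]
      rw [Finset.sum_congr rfl hc2, Finset.sum_const, nsmul_eq_mul]
      congr 1
      have hcard : ((ltP l).filter (fun p => p.2 = b)).card = (b : ℕ) := by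
        rw [← Fin.card_Iio (b := b)]
        apply Finset.card_nbij (i := Prod.fst)
        · rintro ⟨a, b'⟩ hp
          simp only [ltP, mem_coe, mem_filter, mem_univ, true_and, Finset.mem_Iio] at hp ⊢
          rcases hp with ⟨h1, rfl⟩
          exact h1
        · rintro ⟨a, b'⟩ hp ⟨a', b''⟩ hq h
          simp only [ltP, coe_filter, mem_filter, mem_univ, true_and,
            Set.mem_setOf_eq] at hp hq
          simp only at h
          subst h
          rw [hp.2, hq.2]
        · intro a ha
          simp only [coe_Iio, Set.mem_Iio] at ha
          refine ⟨(a, b), ?_, rfl⟩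
          simp only [ltP, coe_filter, mem_filter, mem_univ, true_and, Set.mem_setOf_eq]
          exact ⟨ha, trivial⟩
      rw [hcard]
    rw [h2]
    ring
  -- content hypothesis
  have hcont2 : 2 * ∑ b : Fin l, ((b : ℕ) : ℤ) * (lam b : ℤ) ≤
      ∑ a : Fin l, ((lam a * lam a - lam a : ℕ) : ℤ) := by
    have hterm : ∀ a : Fin l, ((lam a * lam a - lam a : ℕ) : ℤ) =
        (lam a : ℤ) * (lam a : ℤ) - (lam a : ℤ) := by
      intro a
      have hle : lam a ≤ lam a * lam a := Nat.le_mul_of_pos_left _ (hpos a)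
      push_cast [Nat.cast_sub hle]
      ring
    have hexp2 : ∀ i : Fin l, (lam i : ℤ) * ((lam i : ℤ) - 2 * (((i : ℕ) : ℤ) + 1) + 1) =
        ((lam i : ℤ) * (lam i : ℤ) - (lam i : ℤ)) - 2 * (((i : ℕ) : ℤ) * (lam i : ℤ)) := by
      intro i
      ring
    rw [Finset.sum_congr rfl fun i _ => hexp2 i, Finset.sum_sub_distrib,
      ← Finset.mul_sum] at hcontent
    rw [Finset.sum_congr rfl fun a _ => hterm a]
    linarith
  -- final inequality chain
  have hkey : (∑ a : Fin l, ((lam a * lam a - lam a : ℕ) : ℤ)) * S +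
      ∑ ab ∈ (univ : Finset (Fin l)).offDiag, E d ab.1 ab.2 = -S + -S := by
    rw [← hdiagsum, ← hblocks, hsplit, hoff]
  have hEoffsum : -((2 * ∑ b : Fin l, ((b : ℕ) : ℤ) * (lam b : ℤ)) * S) ≤
      ∑ ab ∈ (univ : Finset (Fin l)).offDiag, E d ab.1 ab.2 := by
    have h := Finset.sum_le_sum hEoff
    rw [Finset.sum_neg_distrib, ← Finset.sum_mul] at h
    rw [← hmax]
    exact h
  have hSzero : S = 0 := by
    have h := mul_nonneg (sub_nonneg.mpr hcont2) hS0
    rw [sub_mul] at h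
    linarith
  -- extract d w₀ = 0 and conclude
  have hsum0 : ∑ w : Fin n → Fin l, d w ^ 2 = 0 := by rw [← hS]; exact hSzero
  have hall := (Finset.sum_eq_zero_iff_of_nonneg
    (fun w (_ : w ∈ (univ : Finset (Fin n → Fin l))) => sq_nonneg (d w))).mp hsum0
  have hdw0 : d w₀ = 0 := sq_eq_zero_iff.mp (hall w₀ (Finset.mem_univ _))
  have horb : ∃ g : Equiv.Perm (Fin n), w₀ = w₀ ∘ ⇑g :=
    ⟨1, by rw [Equiv.Perm.coe_one, Function.comp_id]⟩
  have h0 : (m : ℤ) * (fY w₀ Y w₀ : ℤ) - (Hc : ℤ) = 0 := by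
    rw [hd] at hdw0
    simpa [horb] using hdw0
  have h1 : m * fY w₀ Y w₀ = Hc := by
    have : (m : ℤ) * (fY w₀ Y w₀ : ℤ) = (Hc : ℤ) := by linarith
    exact_mod_cast this
  have hmcard : m = 1 + n * (n - 1) / 2 := by rw [hm, Tfin_card]
  exact ⟨fY w₀ Y w₀, by rw [← hmcard, ← h1]⟩

end TilingAux

theorem divisibility_of_tiling (n : ℕ) (hn : 2 ≤ n)
    (htiles : (∃ Y : Set (Equiv.Perm (Fin n)), IsTiling (transpositionsWithId n) Y) ∨
      (∃ X : Set (Equiv.Perm (Fin n)), IsTiling X (transpositionsWithId n)))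
    (l : ℕ) (lam : Fin l → ℕ)
    (hmono : ∀ i j : Fin l, i ≤ j → lam j ≤ lam i)
    (hpos : ∀ i, 0 < lam i)
    (hsum : ∑ i, lam i = n)
    (hcontent : 0 ≤ ∑ i : Fin l,
      (lam i : ℤ) * ((lam i : ℤ) - 2 * (((i : ℕ) : ℤ) + 1) + 1)) :
    (1 + n * (n - 1) / 2) ∣ ∏ i : Fin l, (lam i).factorial := by
  rcases htiles with ⟨Y, hY⟩ | ⟨X, hX⟩
  · exact TilingAux.main_lemma n l lam hpos hsum hcontent Y hY
  · exact TilingAux.main_lemma n l lam hpos hsum hcontent X⁻¹ (tiling_inv hX)
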